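/- Let φ(x,y) be defined as the explicit tridiagonal matrix with entries T₁₁ = (4−x²)/r₁², T₁₂ = T₂₁ = 2x r₂/r₁², T₂₂ = −4(4−x²−4x²y⁴+x⁴y⁴)/(r₁²r₂²), T₂₃ = T₃₂ = 2y r₁/r₂², T₃₃ = y²(x²−4)/r₂², T₁₃ = T₃₁ = 0, where r₁ = √(4+x²+4x²y²), r₂ = √(4+4y²+x²y²). Then for all (x,y) ∈ ℝ², the trace of φ(x,y) equals 0 and the determinant of φ(x,y) equals 0. -/

import Mathlib

open Matrix

noncomputable def r1 (x y : ℝ) : ℝ := Real.sqrt (4 + x^2 + 4*x^2*y^2)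
noncomputable def r2 (x y : ℝ) : ℝ := Real.sqrt (4 + 4*y^2 + x^2*y^2)

noncomputable def phi (x y : ℝ) : Matrix (Fin 3) (Fin 3) ℝ :=
  ((r1 x y)^2 * (r2 x y)^2)⁻¹ •
    !![(4 - x^2) * (r2 x y)^2,  2*x*(r2 x y)^3,  0;
       2*x*(r2 x y)^3,  -4*(4 - x^2 - 4*x^2*y^4 + x^4*y^4),  2*y*(r1 x y)^3;
       0,  2*y*(r1 x y)^3,  y^2*(x^2 - 4)*(r1 x y)^2]

noncomputable def TX : Matrix (Fin 3) (Fin 3) ℝ := !![0,1,0;1,0,0;0,0,0]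

theorem stmt_3 (x y : ℝ) : (phi x y).trace = 0 ∧ (phi x y).det = 0 := by
  have h1 : (r1 x y)^2 = 4 + x^2 + 4*x^2*y^2 := Real.sq_sqrt (by positivity)
  have h2 : (r2 x y)^2 = 4 + 4*y^2 + x^2*y^2 := Real.sq_sqrt (by positivity)
  have hp1 : (0:ℝ) < (r1 x y)^2 := by rw [h1]; positivity
  have hp2 : (0:ℝ) < (r2 x y)^2 := by rw [h2]; positivity
  constructor
  · simp [Matrix.trace, phi, Fin.sum_univ_three, Matrix.diag]
    field_simp
    rw [div_eq_zero_iff]; left; rw [h1, h2]; ring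
  · have hdet : Matrix.det !![(4 - x^2) * (r2 x y)^2,  2*x*(r2 x y)^3,  0;
       2*x*(r2 x y)^3,  -4*(4 - x^2 - 4*x^2*y^4 + x^4*y^4),  2*y*(r1 x y)^3;
       0,  2*y*(r1 x y)^3,  y^2*(x^2 - 4)*(r1 x y)^2] = 0 := by
      simp [Matrix.det_fin_three]
      ring_nf
      rw [show (r1 x y)^6 = ((r1 x y)^2)^3 by ring,
        show (r2 x y)^6 = ((r2 x y)^2)^3 by ring, h1, h2]
      ring
    rw [phi, Matrix.det_smul, hdet, mul_zero]
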